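/- With p_n as above, the second moment ∑_{n=0}^∞ n^2·p_n equals 71/3, so the variance of the number of vertices in the relative interior of the typical I-segment equals 71/3 - 4 = 59/3. Equivalently, 3·∫_0^1 ∫_0^1 [a^2(2b^2 - 11b + 15) - a(4b^2 - 10b - 3) + b(1 + 2b)] db da = 71/3. -/

import Mathlib

open MeasureTheory
open scoped ENNReal

noncomputable def stitP (n : ℕ) : ℝ :=
  3 * ∫ a in (0:ℝ)..1, ∫ b in (0:ℝ)..1,
    (1 - a) ^ 3 * (3 - (1 - a) * (3 - b)) ^ n / (3 - (1 - a) * (2 - b)) ^ (n + 1)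

/-! ### Auxiliary definitions -/

noncomputable def sf (n : ℕ) (a b : ℝ) : ℝ :=
  (1 - a) ^ 3 * (3 - (1 - a) * (3 - b)) ^ n / (3 - (1 - a) * (2 - b)) ^ (n + 1)

noncomputable def sg (a b : ℝ) : ℝ :=
  (3 - (1 - a) * (3 - b)) * ((3 - (1 - a) * (3 - b)) + (3 - (1 - a) * (2 - b)))

noncomputable def sL (n : ℕ) (a : ℝ) : ℝ≥0∞ :=
  ∫⁻ b in Set.Ioc (0:ℝ) 1, ENNReal.ofReal (sf n a b)

noncomputable def sM (n : ℕ) : ℝ≥0∞ := ∫⁻ a in Set.Ioc (0:ℝ) 1, sL n a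

/-! ### Elementary integral of a quadratic -/

lemma integral_quadratic (A B C : ℝ) :
    ∫ x in (0:ℝ)..1, (A * x ^ 2 + B * x + C) = A / 3 + B / 2 + C := by
  have h : ∀ x ∈ Set.uIcc (0:ℝ) 1, HasDerivAt (fun x : ℝ => A * x ^ 3 / 3 + B * x ^ 2 / 2 + C * x)
      (A * x ^ 2 + B * x + C) x := by
    intro x _
    have h1 := ((hasDerivAt_pow 3 x).const_mul (A / 3)).add
      (((hasDerivAt_pow 2 x).const_mul (B / 2)).add ((hasDerivAt_id x).const_mul C))
    convert h1 using 1
    · rfl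
    · rfl
    · funext y; simp [id]; ring
    · push_cast; ring
  rw [intervalIntegral.integral_eq_sub_of_hasDerivAt h
    ((Continuous.intervalIntegrable (by continuity) _ _))]
  ring

/-! ### Pointwise facts on the unit square -/

lemma hy_ge (a b : ℝ) (ha0 : 0 ≤ a) (hb0 : 0 ≤ b) (hb1 : b ≤ 1) :
    1 ≤ 3 - (1 - a) * (2 - b) := by
  nlinarith [mul_nonneg ha0 (show (0:ℝ) ≤ 2 - b by linarith)]

lemma hx_nonneg (a b : ℝ) (ha0 : 0 ≤ a) (hb0 : 0 ≤ b) (ha1 : a ≤ 1) :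
    0 ≤ 3 - (1 - a) * (3 - b) := by nlinarith

lemma sf_nonneg (n : ℕ) (a b : ℝ) (ha0 : 0 ≤ a) (ha1 : a ≤ 1) (hb0 : 0 ≤ b) (hb1 : b ≤ 1) :
    0 ≤ sf n a b := by
  have hy := hy_ge a b ha0 hb0 hb1
  have hx := hx_nonneg a b ha0 hb0 ha1
  have : (0:ℝ) < (3 - (1 - a) * (2 - b)) ^ (n + 1) := pow_pos (by linarith) _
  exact div_nonneg (mul_nonneg (pow_nonneg (by linarith) _) (pow_nonneg hx _)) this.le

lemma sf_le_one (n : ℕ) (a b : ℝ) (ha0 : 0 ≤ a) (ha1 : a ≤ 1) (hb0 : 0 ≤ b) (hb1 : b ≤ 1) :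
    sf n a b ≤ 1 := by
  have hy := hy_ge a b ha0 hb0 hb1
  have hx := hx_nonneg a b ha0 hb0 ha1
  have hxy : 3 - (1 - a) * (3 - b) ≤ 3 - (1 - a) * (2 - b) := by nlinarith
  rw [sf, div_le_one (pow_pos (by linarith) _)]
  calc (1 - a) ^ 3 * (3 - (1 - a) * (3 - b)) ^ n
      ≤ 1 * (3 - (1 - a) * (2 - b)) ^ n := by
        apply mul_le_mul
        · calc (1-a)^3 ≤ 1^3 := pow_le_pow_left₀ (by linarith) (by linarith) 3
            _ = 1 := one_pow 3
        · exact pow_le_pow_left₀ hx hxy n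
        · exact pow_nonneg hx n
        · norm_num
    _ ≤ (3 - (1 - a) * (2 - b)) ^ (n + 1) := by
        rw [one_mul, pow_succ]
        nlinarith [pow_pos (show (0:ℝ) < 3 - (1-a)*(2-b) by linarith) n,
          pow_le_pow_left₀ (show (0:ℝ) ≤ 1 by norm_num)
            (show (1:ℝ) ≤ 3 - (1-a)*(2-b) from hy) n]

lemma sg_nonneg (a b : ℝ) (ha0 : 0 ≤ a) (ha1 : a ≤ 1) (hb0 : 0 ≤ b) (hb1 : b ≤ 1) :
    0 ≤ sg a b := by
  have hy := hy_ge a b ha0 hb0 hb1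
  have hx := hx_nonneg a b ha0 hb0 ha1
  exact mul_nonneg hx (by linarith)

/-! ### The geometric-type series -/

lemma hasSum_sq_mul_geometric {r : ℝ} (h0 : 0 ≤ r) (h1 : r < 1) :
    HasSum (fun n : ℕ => (n : ℝ) ^ 2 * r ^ n) (r * (1 + r) / (1 - r) ^ 3) := by
  have hr : ‖r‖ < 1 := by rw [Real.norm_eq_abs, abs_of_nonneg h0]; exact h1
  have h2 := hasSum_choose_mul_geometric_of_norm_lt_one (𝕜 := ℝ) 2 hr
  have hc1 := hasSum_choose_mul_geometric_of_norm_lt_one (𝕜 := ℝ) 1 hr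
  have hc0 := hasSum_choose_mul_geometric_of_norm_lt_one (𝕜 := ℝ) 0 hr
  have hcomb := ((h2.mul_left 2).sub (hc1.mul_left 3)).add hc0
  have hne : (1 : ℝ) - r ≠ 0 := by linarith
  convert hcomb using 1
  · rfl
  · funext n
    have e2 : (((n + 2).choose 2 : ℕ) : ℝ) = (n + 2) * (n + 1) / 2 := by
      rw [Nat.cast_choose_two]; push_cast; ring
    have e1 : (((n + 1).choose 1 : ℕ) : ℝ) = (n + 1) := by simp
    have e0 : (((n + 0).choose 0 : ℕ) : ℝ) = 1 := by simp
    push_cast [e2, e1, e0]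
    ring
  · field_simp
    ring

lemma hasSum_sf (a b : ℝ) (ha0 : 0 ≤ a) (ha1 : a < 1) (hb0 : 0 ≤ b) (hb1 : b ≤ 1) :
    HasSum (fun n : ℕ => (n : ℝ) ^ 2 * sf n a b) (sg a b) := by
  set x := 3 - (1 - a) * (3 - b) with hxdef
  set y := 3 - (1 - a) * (2 - b) with hydef
  have hy : 1 ≤ y := hy_ge a b ha0 hb0 hb1
  have hx : 0 ≤ x := hx_nonneg a b ha0 hb0 ha1.le
  have hu : 0 < 1 - a := by linarith
  have hyx : y - x = 1 - a := by rw [hxdef, hydef]; ring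
  have hy0 : (0:ℝ) < y := by linarith
  have hr0 : 0 ≤ x / y := div_nonneg hx hy0.le
  have hr1 : x / y < 1 := (div_lt_one hy0).2 (by linarith)
  have hbase := (hasSum_sq_mul_geometric hr0 hr1).mul_left ((1 - a) ^ 3 / y)
  convert hbase using 1
  · rfl
  · funext n
    rw [sf, div_pow, pow_succ, ← hxdef, ← hydef]
    field_simp
    ring
  · rw [sg]
    have h1r : 1 - x / y = (1 - a) / y := by rw [← hyx]; field_simp
    rw [h1r]
    field_simp
    ring

/-! ### Measurability and bounds -/

lemma sf_measurable (n : ℕ) : Measurable (fun p : ℝ × ℝ => sf n p.1 p.2) := by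
  unfold sf; fun_prop

lemma sf_measurable_b (n : ℕ) (a : ℝ) : Measurable (fun b : ℝ => sf n a b) := by
  unfold sf; fun_prop

lemma sL_measurable (n : ℕ) : Measurable (sL n) :=
  (ENNReal.measurable_ofReal.comp (sf_measurable n)).lintegral_prod_right'

lemma sL_le_one (n : ℕ) {a : ℝ} (ha : a ∈ Set.Ioc (0:ℝ) 1) : sL n a ≤ 1 := by
  calc sL n a ≤ ∫⁻ _ in Set.Ioc (0:ℝ) 1, 1 := by
        apply setLIntegral_mono' measurableSet_Ioc
        intro b hb
        exact ENNReal.ofReal_le_one.2 (sf_le_one n a b ha.1.le ha.2 hb.1.le hb.2)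
    _ = 1 := by simp [Real.volume_Ioc]

lemma sM_le_one (n : ℕ) : sM n ≤ 1 := by
  calc sM n ≤ ∫⁻ _ in Set.Ioc (0:ℝ) 1, 1 :=
        setLIntegral_mono' measurableSet_Ioc fun a ha => sL_le_one n ha
    _ = 1 := by simp [Real.volume_Ioc]

lemma J_eq (n : ℕ) :
    (∫ a in (0:ℝ)..1, ∫ b in (0:ℝ)..1, sf n a b) = (sM n).toReal := by
  rw [intervalIntegral.integral_of_le (by norm_num : (0:ℝ) ≤ 1)]
  have step1 : ∀ a ∈ Set.Ioc (0:ℝ) 1,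
      (∫ b in (0:ℝ)..1, sf n a b) = (sL n a).toReal := by
    intro a ha
    rw [intervalIntegral.integral_of_le (by norm_num : (0:ℝ) ≤ 1), sL,
      integral_eq_lintegral_of_nonneg_ae]
    · exact (ae_restrict_iff' measurableSet_Ioc).2
        (ae_of_all _ fun b hb => sf_nonneg n a b ha.1.le ha.2 hb.1.le hb.2)
    · exact (sf_measurable_b n a).aestronglyMeasurable
  rw [setIntegral_congr_fun measurableSet_Ioc step1, sM,
    integral_toReal ((sL_measurable n).aemeasurable.restrict)]
  exact (ae_restrict_iff' measurableSet_Ioc).2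
    (ae_of_all _ fun a ha => lt_of_le_of_lt (sL_le_one n ha) (by norm_num))

/-! ### The swap of sum and integrals -/

lemma sg_continuous (a : ℝ) : Continuous (fun b => sg a b) := by unfold sg; continuity

lemma sg_inner (a : ℝ) : ∫ b in (0:ℝ)..1, sg a b = 61/6*a^2 + 20/3*a + 7/6 := by
  have hEq : Set.EqOn (fun b => sg a b)
      (fun b : ℝ => (2*a^2 - 4*a + 2) * b ^ 2 + (-11*a^2 + 10*a + 1) * b + (15*a^2 + 3*a))
      (Set.uIcc (0:ℝ) 1) := fun b _ => by simp only [sg]; ring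
  rw [intervalIntegral.integral_congr hEq, integral_quadratic]
  ring

lemma tsum_enn (a b : ℝ) (ha0 : 0 ≤ a) (ha1 : a < 1) (hb0 : 0 ≤ b) (hb1 : b ≤ 1) :
    ∑' n : ℕ, (n : ℝ≥0∞) ^ 2 * ENNReal.ofReal (sf n a b) = ENNReal.ofReal (sg a b) := by
  have hs := hasSum_sf a b ha0 ha1 hb0 hb1
  rw [← hs.tsum_eq, ENNReal.ofReal_tsum_of_nonneg
    (fun n => mul_nonneg (sq_nonneg _) (sf_nonneg n a b ha0 ha1.le hb0 hb1)) hs.summable]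
  refine tsum_congr fun n => ?_
  rw [ENNReal.ofReal_mul (sq_nonneg _), ← ENNReal.ofReal_natCast n,
    ← ENNReal.ofReal_pow (by positivity)]

lemma swap_eq :
    ∑' n : ℕ, (n : ℝ≥0∞) ^ 2 * sM n
      = ∫⁻ a in Set.Ioc (0:ℝ) 1, ∫⁻ b in Set.Ioc (0:ℝ) 1,
          ∑' n : ℕ, (n : ℝ≥0∞) ^ 2 * ENNReal.ofReal (sf n a b) := by
  have h1 : ∀ n : ℕ, (n : ℝ≥0∞) ^ 2 * sM n
      = ∫⁻ a in Set.Ioc (0:ℝ) 1, (n : ℝ≥0∞) ^ 2 * sL n a := fun n =>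
    (lintegral_const_mul _ (sL_measurable n)).symm
  simp_rw [h1]
  rw [← lintegral_tsum (fun n => (((sL_measurable n).const_mul _)).aemeasurable)]
  refine lintegral_congr fun a => ?_
  have h2 : ∀ n : ℕ, (n : ℝ≥0∞) ^ 2 * sL n a
      = ∫⁻ b in Set.Ioc (0:ℝ) 1, (n : ℝ≥0∞) ^ 2 * ENNReal.ofReal (sf n a b) := fun n =>
    (lintegral_const_mul _ (ENNReal.measurable_ofReal.comp (sf_measurable_b n a))).symm
  simp_rw [h2]
  rw [← lintegral_tsum]
  intro n
  exact ((ENNReal.measurable_ofReal.comp (sf_measurable_b n a)).const_mul _).aemeasurable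

lemma inner_value :
    (∫⁻ a in Set.Ioc (0:ℝ) 1, ∫⁻ b in Set.Ioc (0:ℝ) 1,
        ∑' n : ℕ, (n : ℝ≥0∞) ^ 2 * ENNReal.ofReal (sf n a b))
      = ENNReal.ofReal (71/9) := by
  have hae : ∀ᵐ a ∂(volume.restrict (Set.Ioc (0:ℝ) 1)), a ∈ Set.Ico (0:ℝ) 1 := by
    have h1 : (volume.restrict (Set.Ioc (0:ℝ) 1)) {(1:ℝ)} = 0 := by
      rw [Measure.restrict_apply (measurableSet_singleton 1)]
      exact measure_mono_null Set.inter_subset_left (Real.volume_singleton)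
    have hne : ∀ᵐ a ∂(volume.restrict (Set.Ioc (0:ℝ) 1)), a ≠ 1 := by
      rw [ae_iff]
      simpa [Set.setOf_eq_eq_singleton, not_not] using h1
    filter_upwards [hne, ae_restrict_mem measurableSet_Ioc] with a ha hmem
    exact ⟨hmem.1.le, lt_of_le_of_ne hmem.2 ha⟩
  rw [lintegral_congr_ae (g := fun a => ENNReal.ofReal (61/6*a^2 + 20/3*a + 7/6)) ?_]
  · rw [← ofReal_integral_eq_lintegral_ofReal]
    · rw [← intervalIntegral.integral_of_le (by norm_num : (0:ℝ) ≤ 1)]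
      rw [show (fun a : ℝ => 61/6*a^2 + 20/3*a + 7/6)
          = fun a : ℝ => 61/6*a^2 + 20/3*a + 7/6 from rfl, integral_quadratic]
      norm_num
    · exact (Continuous.integrableOn_Ioc (by continuity))
    · exact (ae_restrict_iff' measurableSet_Ioc).2 (ae_of_all _ fun a ha => by
        show (0:ℝ) ≤ 61/6*a^2 + 20/3*a + 7/6
        nlinarith [ha.1.le, sq_nonneg a])
  · filter_upwards [hae] with a ha
    calc (∫⁻ b in Set.Ioc (0:ℝ) 1, ∑' n : ℕ, (n : ℝ≥0∞) ^ 2 * ENNReal.ofReal (sf n a b))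
        = ∫⁻ b in Set.Ioc (0:ℝ) 1, ENNReal.ofReal (sg a b) := by
          refine setLIntegral_congr_fun measurableSet_Ioc (fun b hb => ?_)
          exact tsum_enn a b ha.1 ha.2 hb.1.le hb.2
      _ = ENNReal.ofReal (∫ b in Set.Ioc (0:ℝ) 1, sg a b) := by
          rw [← ofReal_integral_eq_lintegral_ofReal]
          · exact (Continuous.integrableOn_Ioc (sg_continuous a))
          · exact (ae_restrict_iff' measurableSet_Ioc).2
              (ae_of_all _ fun b hb => sg_nonneg a b ha.1 ha.2.le hb.1.le hb.2)
      _ = ENNReal.ofReal (61/6*a^2 + 20/3*a + 7/6) := by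
          rw [← intervalIntegral.integral_of_le (by norm_num : (0:ℝ) ≤ 1), sg_inner]

lemma tsum_main : ∑' n : ℕ, (n : ℝ) ^ 2 * stitP n = 71 / 3 := by
  have hstit : ∀ n : ℕ, stitP n = 3 * (sM n).toReal := fun n => by
    rw [stitP, ← J_eq n]; rfl
  have hterm : ∀ n : ℕ, (n : ℝ) ^ 2 * stitP n = 3 * (((n : ℝ≥0∞)) ^ 2 * sM n).toReal := by
    intro n
    rw [hstit n, ENNReal.toReal_mul]
    have : ((n : ℝ≥0∞) ^ 2).toReal = (n : ℝ) ^ 2 := by simp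
    rw [this]; ring
  rw [tsum_congr hterm, tsum_mul_left, ← ENNReal.tsum_toReal_eq
    (fun n => ENNReal.mul_ne_top (ENNReal.pow_ne_top (ENNReal.natCast_ne_top n))
      (lt_of_le_of_lt (sM_le_one n) ENNReal.one_lt_top).ne),
    swap_eq, inner_value, ENNReal.toReal_ofReal (by norm_num)]
  norm_num

theorem stit_second_moment_and_variance :
    (∑' n : ℕ, (n : ℝ) ^ 2 * stitP n = 71 / 3) ∧
    (∑' n : ℕ, (n : ℝ) ^ 2 * stitP n) - 2 ^ 2 = 59 / 3 ∧
    3 * (∫ a in (0:ℝ)..1, ∫ b in (0:ℝ)..1,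
        a ^ 2 * (2 * b ^ 2 - 11 * b + 15) - a * (4 * b ^ 2 - 10 * b - 3) + b * (1 + 2 * b)) =
      71 / 3 := by
  have part3inner : ∀ a : ℝ,
      (∫ b in (0:ℝ)..1,
        a ^ 2 * (2 * b ^ 2 - 11 * b + 15) - a * (4 * b ^ 2 - 10 * b - 3) + b * (1 + 2 * b))
        = 61/6*a^2 + 20/3*a + 7/6 := by
    intro a
    have hEq : Set.EqOn
        (fun b : ℝ => a ^ 2 * (2 * b ^ 2 - 11 * b + 15) - a * (4 * b ^ 2 - 10 * b - 3)
          + b * (1 + 2 * b))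
        (fun b : ℝ => (2*a^2 - 4*a + 2) * b ^ 2 + (-11*a^2 + 10*a + 1) * b + (15*a^2 + 3*a))
        (Set.uIcc (0:ℝ) 1) := fun b _ => by ring
    rw [intervalIntegral.integral_congr hEq, integral_quadratic]
    ring
  have part3 : 3 * (∫ a in (0:ℝ)..1, ∫ b in (0:ℝ)..1,
      a ^ 2 * (2 * b ^ 2 - 11 * b + 15) - a * (4 * b ^ 2 - 10 * b - 3) + b * (1 + 2 * b))
      = 71 / 3 := by
    simp only [part3inner]
    rw [show (fun a : ℝ => 61/6*a^2 + 20/3*a + 7/6)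
        = fun a : ℝ => 61/6*a^2 + 20/3*a + 7/6 from rfl, integral_quadratic]
    norm_num
  exact ⟨tsum_main, by rw [tsum_main]; norm_num, part3⟩
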